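/- Let p be an odd prime and set d_p = (p−1)/4 if p ≡ 1 (mod 4) and d_p = (p+1)/4 if p ≡ 3 (mod 4). Then every quadratic residue a ∈ F_p* can be written as a = x + y with x and y quadratic residues in exactly d_p − 1 ways (counting ordered pairs (x, y) of nonzero quadratic residues with x + y = a), and likewise every quadratic non-residue b ∈ F_p* can be written as b = x + y with x and y quadratic non-residues in exactly d_p − 1 ways (counting ordered pairs). -/

import Mathlib

open Finset

section aux
variable {p : ℕ} [Fact p.Prime]

lemma hF' (hp2 : p ≠ 2) : ringChar (ZMod p) ≠ 2 := by
  rw [ZMod.ringChar_zmod_n]; exact hp2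

-- key quartic sum
lemma sumA (hp2 : p ≠ 2) (a : ZMod p) (ha : a ≠ 0) :
    ∑ x : ZMod p, quadraticChar (ZMod p) x * quadraticChar (ZMod p) (a - x)
      = - quadraticChar (ZMod p) (-1) := by
  set χ := quadraticChar (ZMod p) with hχ
  have hz : χ 0 = 0 := quadraticChar_zero
  have h0 : ∑ x : ZMod p, χ x * χ (a - x)
      = ∑ x ∈ univ \ {(0 : ZMod p)}, χ x * χ (a - x) + χ 0 * χ (a - 0) := by
    rw [← Finset.sum_eq_sum_sdiff_singleton_add (Finset.mem_univ (0 : ZMod p))]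
  have h1 : ∀ x ∈ univ \ {(0 : ZMod p)}, χ x * χ (a - x) = χ (a * x⁻¹ - 1) := by
    intro x hx
    simp only [mem_sdiff, mem_singleton, mem_univ, true_and] at hx
    have hne : χ x ≠ 0 := fun h => hx (quadraticChar_eq_zero_iff.mp h)
    have hmul : χ x * χ x⁻¹ = 1 := by
      rw [← map_mul, mul_inv_cancel₀ hx, map_one]
    have hsq : χ x * χ x = 1 := by
      have := quadraticChar_sq_one (F := ZMod p) hx
      rwa [pow_two] at this
    have hinv : χ x⁻¹ = χ x := mul_left_cancel₀ hne (hmul.trans hsq.symm)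
    have harg : a * x⁻¹ - 1 = x⁻¹ * (a - x) := by field_simp
    rw [harg, map_mul, hinv]
  rw [h0, Finset.sum_congr rfl h1]
  have h2 : ∑ x ∈ univ \ {(0 : ZMod p)}, χ (a * x⁻¹ - 1)
      = ∑ z ∈ univ \ {(-1 : ZMod p)}, χ z := by
    refine Finset.sum_nbij' (fun x => a * x⁻¹ - 1) (fun z => a * (z + 1)⁻¹) ?_ ?_ ?_ ?_ ?_
    · intro x hx
      simp only [mem_sdiff, mem_singleton, mem_univ, true_and] at hx ⊢
      intro h
      have : a * x⁻¹ = 0 := by linear_combination h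
      rcases mul_eq_zero.mp this with h' | h'
      · exact ha h'
      · exact hx (by simpa using inv_eq_zero.mp h')
    · intro z hz
      simp only [mem_sdiff, mem_singleton, mem_univ, true_and] at hz ⊢
      have hz1 : z + 1 ≠ 0 := fun h => hz (by linear_combination h)
      exact mul_ne_zero ha (inv_ne_zero hz1)
    · intro x hx
      simp only [mem_sdiff, mem_singleton, mem_univ, true_and] at hx
      field_simp
      rw [sub_add_cancel, div_self ha]
    · intro z hz
      simp only [mem_sdiff, mem_singleton, mem_univ, true_and] at hz
      have hz1 : z + 1 ≠ 0 := fun h => hz (by linear_combination h)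
      field_simp
      ring
    · intro x _; rfl
  rw [h2]
  have htot : ∑ z ∈ univ \ {(-1 : ZMod p)}, χ z + χ (-1) = 0 := by
    rw [← Finset.sum_eq_sum_sdiff_singleton_add (Finset.mem_univ (-1 : ZMod p))]
    exact quadraticChar_sum_zero (hF' hp2)
  rw [hz, zero_mul, add_zero]
  linarith

lemma sumB (hp2 : p ≠ 2) (a : ZMod p) :
    ∑ x : ZMod p, quadraticChar (ZMod p) x ^ 2 * quadraticChar (ZMod p) (a - x)
      = - quadraticChar (ZMod p) a := by
  set χ := quadraticChar (ZMod p) with hχ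
  have hz : χ 0 = 0 := quadraticChar_zero
  have htot : ∑ x : ZMod p, χ (a - x) = 0 := by
    rw [← quadraticChar_sum_zero (hF' hp2)]
    exact Fintype.sum_equiv (Equiv.subLeft a) _ _ (fun x => rfl)
  have h0 : ∑ x : ZMod p, χ x ^ 2 * χ (a - x)
      = ∑ x ∈ univ \ {(0 : ZMod p)}, χ x ^ 2 * χ (a - x) + χ 0 ^ 2 * χ (a - 0) := by
    rw [← Finset.sum_eq_sum_sdiff_singleton_add (Finset.mem_univ (0 : ZMod p))]
  have h1 : ∀ x ∈ univ \ {(0 : ZMod p)}, χ x ^ 2 * χ (a - x) = χ (a - x) := by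
    intro x hx
    simp only [mem_sdiff, mem_singleton, mem_univ, true_and] at hx
    rw [quadraticChar_sq_one hx, one_mul]
  have h2 : ∑ x ∈ univ \ {(0 : ZMod p)}, χ (a - x) + χ (a - 0) = 0 := by
    rw [← Finset.sum_eq_sum_sdiff_singleton_add (Finset.mem_univ (0 : ZMod p))]
    exact htot
  rw [h0, Finset.sum_congr rfl h1]
  simp only [sub_zero] at h2 ⊢
  rw [hz]
  ring_nf
  linarith

lemma sumB' (hp2 : p ≠ 2) (a : ZMod p) :
    ∑ x : ZMod p, quadraticChar (ZMod p) x * quadraticChar (ZMod p) (a - x) ^ 2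
      = - quadraticChar (ZMod p) a := by
  set χ := quadraticChar (ZMod p) with hχ
  have := sumB hp2 a
  rw [← this]
  refine Fintype.sum_equiv (Equiv.subLeft a) _ _ (fun x => ?_)
  simp only [Equiv.subLeft_apply, sub_sub_cancel]
  ring

lemma sumC (a : ZMod p) (ha : a ≠ 0) :
    ∑ x : ZMod p, quadraticChar (ZMod p) x ^ 2 * quadraticChar (ZMod p) (a - x) ^ 2
      = (p : ℤ) - 2 := by
  set χ := quadraticChar (ZMod p) with hχ
  have hz : χ 0 = 0 := quadraticChar_zero
  have hterm : ∀ x : ZMod p, χ x ^ 2 * χ (a - x) ^ 2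
      = if x = 0 ∨ x = a then 0 else 1 := by
    intro x
    by_cases h : x = 0 ∨ x = a
    · rcases h with h | h
      · simp [h, hz]
      · simp [h, hz]
    · push_neg at h
      rw [quadraticChar_sq_one h.1, quadraticChar_sq_one (sub_ne_zero.mpr (Ne.symm h.2))]
      simp [h.1, h.2]
  rw [Finset.sum_congr rfl (fun x _ => hterm x), Finset.sum_ite]
  simp only [smul_zero, zero_add, Finset.sum_const, nsmul_eq_mul, mul_one]
  have hfil : (univ.filter fun x : ZMod p => ¬(x = 0 ∨ x = a)) = univ \ {0, a} := by
    ext x; simp [not_or]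
  rw [hfil, Finset.card_sdiff_of_subset (Finset.subset_univ _)]
  have hcard2 : ({0, a} : Finset (ZMod p)).card = 2 := by
    rw [Finset.card_insert_of_notMem (by simpa using (Ne.symm ha)), Finset.card_singleton]
  have hcardu : (univ : Finset (ZMod p)).card = p := by
    simpa using ZMod.card p
  rw [hcard2, hcardu]
  have h2p : 2 ≤ p := (Fact.out : p.Prime).two_le
  push_cast [Nat.cast_sub h2p]
  ring

lemma count_eq (hp2 : p ≠ 2) (a : ZMod p) (ha : a ≠ 0) :
    4 * (((univ : Finset (ZMod p)).filter fun x =>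
        quadraticChar (ZMod p) x = quadraticChar (ZMod p) a ∧
        quadraticChar (ZMod p) (a - x) = quadraticChar (ZMod p) a).card : ℤ)
      = (p : ℤ) - 4 - quadraticChar (ZMod p) (-1) := by
  set χ := quadraticChar (ZMod p) with hχ
  have hz : χ 0 = 0 := quadraticChar_zero
  set ε := χ a with hε
  have hε2 : ε * ε = 1 := by
    have := quadraticChar_sq_one (F := ZMod p) ha
    rwa [pow_two] at this
  have hεd : ε = 1 ∨ ε = -1 := quadraticChar_dichotomy ha
  have key : ∀ x : ZMod p,
      (if χ x = ε ∧ χ (a - x) = ε then (4 : ℤ) else 0)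
        = (χ x ^ 2 + ε * χ x) * (χ (a - x) ^ 2 + ε * χ (a - x)) := by
    intro x
    have t1 : χ x = 0 ∨ χ x = 1 ∨ χ x = -1 := by
      by_cases h : x = 0
      · left; rw [h]; exact hz
      · right; exact quadraticChar_dichotomy h
    have t2 : χ (a - x) = 0 ∨ χ (a - x) = 1 ∨ χ (a - x) = -1 := by
      by_cases h : a - x = 0
      · left; rw [h]; exact hz
      · right; exact quadraticChar_dichotomy h
    rcases hεd with e | e <;> rcases t1 with h1 | h1 | h1 <;>
      rcases t2 with h2 | h2 | h2 <;>
      simp only [h1, h2, e] <;> norm_num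
  have hcount : 4 * (((univ : Finset (ZMod p)).filter fun x =>
      χ x = ε ∧ χ (a - x) = ε).card : ℤ)
      = ∑ x : ZMod p, (if χ x = ε ∧ χ (a - x) = ε then (4 : ℤ) else 0) := by
    rw [Finset.sum_ite, Finset.sum_const, Finset.sum_const_zero, add_zero,
      nsmul_eq_mul, mul_comm]
  rw [hcount, Finset.sum_congr rfl (fun x _ => key x)]
  have expand : ∀ x : ZMod p,
      (χ x ^ 2 + ε * χ x) * (χ (a - x) ^ 2 + ε * χ (a - x))
      = χ x ^ 2 * χ (a - x) ^ 2 + ε * (χ x ^ 2 * χ (a - x))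
        + ε * (χ x * χ (a - x) ^ 2) + (ε * ε) * (χ x * χ (a - x)) := by
    intro x; ring
  rw [Finset.sum_congr rfl (fun x _ => expand x)]
  simp only [Finset.sum_add_distrib, ← Finset.mul_sum]
  rw [sumA hp2 a ha, sumB hp2 a, sumB' hp2 a, sumC a ha, hε2]
  have : ε * χ a = 1 := by rw [← hε]; exact hε2
  rw [← hχ, ← hε]
  linear_combination (-2 : ℤ) * this

lemma set_count (a : ZMod p) (ha : a ≠ 0) (C : ZMod p → Prop)
    (hC : ∀ x, C x ↔ quadraticChar (ZMod p) x = quadraticChar (ZMod p) a) :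
    {q : ZMod p × ZMod p | C q.1 ∧ C q.2 ∧ q.1 + q.2 = a}.ncard
      = ((univ : Finset (ZMod p)).filter fun x =>
          quadraticChar (ZMod p) x = quadraticChar (ZMod p) a ∧
          quadraticChar (ZMod p) (a - x) = quadraticChar (ZMod p) a).card := by
  classical
  set χ := quadraticChar (ZMod p) with hχ
  have hset : {q : ZMod p × ZMod p | C q.1 ∧ C q.2 ∧ q.1 + q.2 = a}
      = (fun x : ZMod p => (x, a - x)) ''
        {x : ZMod p | χ x = χ a ∧ χ (a - x) = χ a} := by
    ext ⟨x, y⟩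
    simp only [Set.mem_setOf_eq, Set.mem_image, Prod.mk.injEq]
    constructor
    · rintro ⟨h1, h2, h3⟩
      refine ⟨x, ⟨(hC x).mp h1, ?_⟩, rfl, ?_⟩
      · have hy : a - x = y := by linear_combination -h3
        rw [hy]; exact (hC y).mp h2
      · linear_combination -h3
    · rintro ⟨z, ⟨hz1, hz2⟩, rfl, rfl⟩
      exact ⟨(hC z).mpr hz1, (hC _).mpr hz2, by ring⟩
  rw [hset, Set.ncard_image_of_injective _ (fun x y h => (Prod.mk.injEq _ _ _ _ ▸ h).1)]
  have : {x : ZMod p | χ x = χ a ∧ χ (a - x) = χ a}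
      = ↑((univ : Finset (ZMod p)).filter fun x => χ x = χ a ∧ χ (a - x) = χ a) := by
    ext x; simp
  rw [this, Set.ncard_coe_finset]

end aux

theorem perron_same_class_counts
    (p : ℕ) (hp : p.Prime) (hpodd : Odd p)
    (d : ℕ)
    (hd1 : p % 4 = 1 → d = (p - 1) / 4)
    (hd3 : p % 4 = 3 → d = (p + 1) / 4) :
    (∀ a : ZMod p, a ≠ 0 → IsSquare a →
      {q : ZMod p × ZMod p |
        (q.1 ≠ 0 ∧ IsSquare q.1) ∧ (q.2 ≠ 0 ∧ IsSquare q.2) ∧ q.1 + q.2 = a}.ncard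
        = d - 1) ∧
    (∀ b : ZMod p, b ≠ 0 → ¬ IsSquare b →
      {q : ZMod p × ZMod p |
        (q.1 ≠ 0 ∧ ¬ IsSquare q.1) ∧ (q.2 ≠ 0 ∧ ¬ IsSquare q.2) ∧ q.1 + q.2 = b}.ncard
        = d - 1) := by
  haveI : Fact p.Prime := ⟨hp⟩
  have hodd : p % 2 = 1 := Nat.odd_iff.mp hpodd
  have hp2 : p ≠ 2 := by omega
  have hmod : p % 4 = 1 ∨ p % 4 = 3 := by omega
  have hm1 : (-1 : ZMod p) ≠ 0 := neg_ne_zero.mpr one_ne_zero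
  have main : ∀ a : ZMod p, a ≠ 0 → ∀ C : ZMod p → Prop,
      (∀ x, C x ↔ quadraticChar (ZMod p) x = quadraticChar (ZMod p) a) →
      {q : ZMod p × ZMod p | C q.1 ∧ C q.2 ∧ q.1 + q.2 = a}.ncard = d - 1 := by
    intro a ha C hC
    rw [set_count a ha C hC]
    have h4 := count_eq hp2 a ha
    rcases hmod with h | h
    · have hc : quadraticChar (ZMod p) (-1) = 1 :=
        (quadraticChar_one_iff_isSquare hm1).mpr
          (ZMod.exists_sq_eq_neg_one_iff.mpr (by omega))
      rw [hc] at h4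
      have hd := hd1 h
      omega
    · have hc : quadraticChar (ZMod p) (-1) = -1 :=
        quadraticChar_neg_one_iff_not_isSquare.mpr
          (fun hs => (ZMod.exists_sq_eq_neg_one_iff.mp hs) h)
      rw [hc] at h4
      have hd := hd3 h
      omega
  constructor
  · intro a ha hsa
    have hχa : quadraticChar (ZMod p) a = 1 := (quadraticChar_one_iff_isSquare ha).mpr hsa
    refine main a ha (fun x => x ≠ 0 ∧ IsSquare x) (fun x => ?_)
    rw [hχa]
    constructor
    · rintro ⟨hx0, hx⟩
      exact (quadraticChar_one_iff_isSquare hx0).mpr hx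
    · intro h
      have hx0 : x ≠ 0 := by
        intro e
        rw [e, quadraticChar_zero] at h
        exact zero_ne_one h
      exact ⟨hx0, (quadraticChar_one_iff_isSquare hx0).mp h⟩
  · intro b hb hsb
    have hχb : quadraticChar (ZMod p) b = -1 := quadraticChar_neg_one_iff_not_isSquare.mpr hsb
    refine main b hb (fun x => x ≠ 0 ∧ ¬ IsSquare x) (fun x => ?_)
    rw [hχb]
    constructor
    · rintro ⟨hx0, hx⟩
      exact quadraticChar_neg_one_iff_not_isSquare.mpr hx
    · intro h
      have hx0 : x ≠ 0 := by
        intro e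
        rw [e, quadraticChar_zero] at h
        norm_num at h
      exact ⟨hx0, quadraticChar_neg_one_iff_not_isSquare.mp h⟩
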